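/- Let n ≥ 2, let ϱ ≥ 1 be an integer and ς² > 0, and let γ_1, …, γ_n be i.i.d. Gamma(ϱ, ς²) random variables. Let F_ϱ denote the CDF of the Gamma(ϱ, 1) distribution and F_ϱ^{−1} its inverse on (0, 1). Then for every z ≥ 1, P(γ_n / γ_(1) > z) = (n−1) ∫₀¹ (1 − F_ϱ( z · F_ϱ^{−1}(1 − w) )) w^{n−2} dw; in particular this probability does not depend on the scale parameter ς². -/

import Mathlib

open MeasureTheory ProbabilityTheory Set

/-- The density of the Gamma distribution with integer shape `ϱ ≥ 1` and scale `s = ς² > 0`: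
`u ↦ u^(ϱ-1) exp(-u/s) / (s^ϱ (ϱ-1)!)` on `(0, ∞)`. -/
noncomputable def gammaIntPdf (ϱ : ℕ) (s u : ℝ) : ℝ :=
  if 0 < u then u ^ (ϱ - 1) * Real.exp (-u / s) / (s ^ ϱ * (Nat.factorial (ϱ - 1))) else 0

/-- The Gamma distribution with integer shape `ϱ ≥ 1` and scale `s = ς² > 0`. -/
noncomputable def gammaIntMeasure (ϱ : ℕ) (s : ℝ) : Measure ℝ :=
  MeasureTheory.volume.withDensity fun u => ENNReal.ofReal (gammaIntPdf ϱ s u)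

namespace GammaAux

/-- standard gamma integrand -/
noncomputable def g0 (ϱ : ℕ) (t : ℝ) : ℝ := t ^ (ϱ - 1) * Real.exp (-t)

/-- standard Gamma(ϱ,1) CDF -/
noncomputable def stdF (ϱ : ℕ) (x : ℝ) : ℝ :=
  (1 / (Nat.factorial (ϱ - 1) : ℝ)) * ∫ t in (0:ℝ)..x, g0 ϱ t

variable {ϱ : ℕ}

lemma g0_cont : Continuous (g0 ϱ) := by
  unfold g0; fun_prop

lemma g0_nonneg {t : ℝ} (ht : 0 ≤ t) : 0 ≤ g0 ϱ t :=
  mul_nonneg (pow_nonneg ht _) (Real.exp_nonneg _)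

lemma g0_pos {t : ℝ} (ht : 0 < t) : 0 < g0 ϱ t :=
  mul_pos (pow_pos ht _) (Real.exp_pos _)

lemma g0_intervalIntegrable (a b : ℝ) : IntervalIntegrable (g0 ϱ) volume a b :=
  g0_cont.intervalIntegrable a b

lemma g0_integrableOn_Ioi (hϱ : 1 ≤ ϱ) (x : ℝ) (hx : 0 ≤ x) :
    IntegrableOn (g0 ϱ) (Ioi x) := by
  have h := Real.GammaIntegral_convergent (s := (ϱ : ℝ)) (by positivity)
  have h2 : IntegrableOn (g0 ϱ) (Ioi 0) := by
    refine (integrableOn_congr_fun ?_ measurableSet_Ioi).mp h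
    intro t ht
    simp only [g0]
    rw [mul_comm]
    congr 1
    rw [show (ϱ : ℝ) - 1 = ((ϱ - 1 : ℕ) : ℝ) by push_cast [hϱ]; ring,
      Real.rpow_natCast]
  exact h2.mono_set (Ioi_subset_Ioi hx)

lemma g0_integral_Ioi_zero (hϱ : 1 ≤ ϱ) :
    ∫ t in Ioi (0:ℝ), g0 ϱ t = (Nat.factorial (ϱ - 1) : ℝ) := by
  have h := Real.Gamma_eq_integral (s := (ϱ : ℝ)) (by positivity)
  have hg : Real.Gamma (ϱ : ℝ) = (Nat.factorial (ϱ - 1) : ℝ) := by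
    rw [show (ϱ : ℝ) = ((ϱ - 1 : ℕ) : ℝ) + 1 by push_cast [hϱ]; ring]
    exact_mod_cast Real.Gamma_nat_eq_factorial (ϱ - 1)
  rw [hg] at h
  rw [h]
  refine setIntegral_congr_fun measurableSet_Ioi fun t ht => ?_
  simp only [g0]
  rw [mul_comm]
  congr 1
  rw [show (ϱ : ℝ) - 1 = ((ϱ - 1 : ℕ) : ℝ) by push_cast [hϱ]; ring,
    Real.rpow_natCast]

lemma stdF_hasDerivAt (x : ℝ) :
    HasDerivAt (stdF ϱ) (g0 ϱ x / (Nat.factorial (ϱ - 1) : ℝ)) x := by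
  have h : HasDerivAt (fun u => ∫ t in (0:ℝ)..u, g0 ϱ t) (g0 ϱ x) x :=
    intervalIntegral.integral_hasDerivAt_right (g0_intervalIntegrable 0 x)
      (g0_cont.stronglyMeasurableAtFilter _ _) g0_cont.continuousAt
  have := h.const_mul (1 / (Nat.factorial (ϱ - 1) : ℝ))
  show HasDerivAt (fun u => (1 / (Nat.factorial (ϱ - 1) : ℝ)) * ∫ t in (0:ℝ)..u, g0 ϱ t) _ x
  simpa [div_eq_mul_inv, mul_comm] using this

lemma stdF_continuous : Continuous (stdF ϱ) := by
  have : ∀ x, HasDerivAt (stdF ϱ) (g0 ϱ x / (Nat.factorial (ϱ - 1) : ℝ)) x := stdF_hasDerivAt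
  exact continuous_iff_continuousAt.2 fun x => (this x).continuousAt

lemma stdF_zero : stdF ϱ 0 = 0 := by simp [stdF]

lemma stdF_strictMonoOn : StrictMonoOn (stdF ϱ) (Ici 0) := by
  refine strictMonoOn_of_deriv_pos (convex_Ici 0) stdF_continuous.continuousOn ?_
  intro x hx
  rw [interior_Ici] at hx
  rw [(stdF_hasDerivAt x).deriv]
  have := g0_pos (ϱ := ϱ) hx
  positivity

lemma stdF_eq_one_sub_tail (hϱ : 1 ≤ ϱ) {x : ℝ} (hx : 0 ≤ x) :
    stdF ϱ x = 1 - (1 / (Nat.factorial (ϱ - 1) : ℝ)) * ∫ t in Ioi x, g0 ϱ t := by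
  have hsplit : (∫ t in Ioi (0:ℝ), g0 ϱ t) =
      (∫ t in Ioc 0 x, g0 ϱ t) + ∫ t in Ioi x, g0 ϱ t := by
    rw [← setIntegral_union (Ioc_disjoint_Ioi le_rfl) measurableSet_Ioi
      (g0_intervalIntegrable 0 x).1 (g0_integrableOn_Ioi hϱ x hx),
      Ioc_union_Ioi_eq_Ioi hx]
  have h0 : (∫ t in Ioc (0:ℝ) x, g0 ϱ t) = ∫ t in (0:ℝ)..x, g0 ϱ t :=
    (intervalIntegral.integral_of_le hx).symm
  have hfact : (0:ℝ) < (Nat.factorial (ϱ - 1) : ℝ) := by positivity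
  rw [stdF]
  rw [← h0]
  have := g0_integral_Ioi_zero (ϱ := ϱ) hϱ
  rw [this] at hsplit
  field_simp
  linarith [hsplit]

lemma tail_pos (hϱ : 1 ≤ ϱ) {x : ℝ} (hx : 0 ≤ x) :
    0 < ∫ t in Ioi x, g0 ϱ t := by
  rw [setIntegral_pos_iff_support_of_nonneg_ae]
  · have hsub : Ioi x ⊆ Function.support (g0 ϱ) ∩ Ioi x := by
      intro t ht
      exact ⟨ne_of_gt (g0_pos (lt_of_le_of_lt hx ht)), ht⟩
    calc (0:ENNReal) < volume (Ioi x) := by simp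
      _ ≤ volume (Function.support (g0 ϱ) ∩ Ioi x) := measure_mono hsub
  · filter_upwards [ae_restrict_mem measurableSet_Ioi] with t ht
    exact g0_nonneg (le_of_lt (lt_of_le_of_lt hx ht))
  · exact g0_integrableOn_Ioi hϱ x hx

lemma stdF_lt_one (hϱ : 1 ≤ ϱ) {x : ℝ} (hx : 0 ≤ x) : stdF ϱ x < 1 := by
  rw [stdF_eq_one_sub_tail hϱ hx]
  have := tail_pos hϱ hx
  have hfact : (0:ℝ) < (Nat.factorial (ϱ - 1) : ℝ) := by positivity
  nlinarith [one_div_pos.mpr hfact]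

lemma stdF_nonneg {x : ℝ} (hx : 0 ≤ x) : 0 ≤ stdF ϱ x := by
  rcases eq_or_lt_of_le hx with h | h
  · rw [← h, stdF_zero]
  · rw [← stdF_zero (ϱ := ϱ)]
    exact le_of_lt (stdF_strictMonoOn (mem_Ici.mpr le_rfl) hx h)

lemma stdF_pos {x : ℝ} (hx : 0 < x) : 0 < stdF ϱ x := by
  rw [← stdF_zero (ϱ := ϱ)]
  exact stdF_strictMonoOn (mem_Ici.mpr le_rfl) (le_of_lt hx) hx

/-- survival integral: `∫_{Ioi x} g0/(ϱ-1)! = 1 - stdF x` for `x ≥ 0`. -/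
lemma tail_eq (hϱ : 1 ≤ ϱ) {x : ℝ} (hx : 0 ≤ x) :
    (1 / (Nat.factorial (ϱ - 1) : ℝ)) * (∫ t in Ioi x, g0 ϱ t) = 1 - stdF ϱ x := by
  rw [stdF_eq_one_sub_tail hϱ hx]; ring

lemma gammaIntPdf_nonneg (ϱ : ℕ) {s : ℝ} (hs : 0 < s) (u : ℝ) : 0 ≤ gammaIntPdf ϱ s u := by
  unfold gammaIntPdf
  split_ifs with h
  · positivity
  · exact le_rfl

lemma gammaIntPdf_eq (hϱ : 1 ≤ ϱ) {s : ℝ} (hs : 0 < s) (u : ℝ) :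
    gammaIntPdf ϱ s u =
      if 0 < u then g0 ϱ (u / s) / (s * (Nat.factorial (ϱ - 1) : ℝ)) else 0 := by
  unfold gammaIntPdf g0
  split_ifs with h
  · have hϱ' : ϱ - 1 + 1 = ϱ := by omega
    rw [div_pow, neg_div, ← hϱ', pow_succ]
    have hs' : s ≠ 0 := ne_of_gt hs
    field_simp
    ring_nf
    rw [Nat.add_sub_cancel_left]
  · rfl

lemma gammaIntPdf_measurable (ϱ : ℕ) (s : ℝ) : Measurable (gammaIntPdf ϱ s) := by
  unfold gammaIntPdf
  exact Measurable.ite measurableSet_Ioi (by fun_prop) measurable_const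

lemma gammaIntPdf_integrableOn_Ioi (hϱ : 1 ≤ ϱ) {s : ℝ} (hs : 0 < s) {t : ℝ} (ht : 0 ≤ t) :
    IntegrableOn (gammaIntPdf ϱ s) (Ioi t) := by
  have : IntegrableOn (fun u => g0 ϱ (s⁻¹ * u) / (s * (Nat.factorial (ϱ - 1) : ℝ))) (Ioi t) := by
    apply Integrable.div_const
    exact (integrableOn_Ioi_comp_mul_left_iff (g0 ϱ) t (inv_pos.mpr hs)).mpr
      (g0_integrableOn_Ioi hϱ _ (by positivity))
  refine this.congr_fun (fun u hu => ?_) measurableSet_Ioi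
  dsimp only
  rw [gammaIntPdf_eq hϱ hs, if_pos (lt_of_le_of_lt ht hu),
    show s⁻¹ * u = u / s by field_simp]

lemma gammaIntPdf_integral_Ioi (hϱ : 1 ≤ ϱ) {s : ℝ} (hs : 0 < s) {t : ℝ} (ht : 0 ≤ t) :
    ∫ u in Ioi t, gammaIntPdf ϱ s u = 1 - stdF ϱ (t / s) := by
  have h1 : ∫ u in Ioi t, gammaIntPdf ϱ s u
      = ∫ u in Ioi t, g0 ϱ (s⁻¹ * u) / (s * (Nat.factorial (ϱ - 1) : ℝ)) := by
    refine setIntegral_congr_fun measurableSet_Ioi (fun u hu => ?_)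
    rw [gammaIntPdf_eq hϱ hs, if_pos (lt_of_le_of_lt ht hu),
      show s⁻¹ * u = u / s by field_simp]
  rw [h1]
  rw [show (fun u => g0 ϱ (s⁻¹ * u) / (s * (Nat.factorial (ϱ - 1) : ℝ)))
      = (fun u => (1 / (s * (Nat.factorial (ϱ - 1) : ℝ))) • g0 ϱ (s⁻¹ * u)) by
    funext u; rw [smul_eq_mul]; ring]
  rw [integral_smul, integral_comp_mul_left_Ioi (g0 ϱ) t (inv_pos.mpr hs)]
  have htt : s⁻¹ * t = t / s := by field_simp
  rw [htt]
  rw [← tail_eq hϱ (by positivity)]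
  simp only [smul_eq_mul, inv_inv]
  have hfact : (0:ℝ) < (Nat.factorial (ϱ - 1) : ℝ) := by positivity
  field_simp

lemma gamma_survival (hϱ : 1 ≤ ϱ) {s : ℝ} (hs : 0 < s) {t : ℝ} (ht : 0 ≤ t) :
    gammaIntMeasure ϱ s (Ioi t) = ENNReal.ofReal (1 - stdF ϱ (t / s)) := by
  rw [gammaIntMeasure, withDensity_apply _ measurableSet_Ioi]
  rw [← ofReal_integral_eq_lintegral_ofReal
    (gammaIntPdf_integrableOn_Ioi hϱ hs ht)
    (Filter.Eventually.of_forall (gammaIntPdf_nonneg ϱ hs))]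
  rw [gammaIntPdf_integral_Ioi hϱ hs ht]

lemma gamma_Iic_zero (hϱ : 1 ≤ ϱ) {s : ℝ} (hs : 0 < s) :
    gammaIntMeasure ϱ s (Iic 0) = 0 := by
  rw [gammaIntMeasure, withDensity_apply _ measurableSet_Iic]
  rw [setLIntegral_congr_fun measurableSet_Iic
    (fun u hu => ?_), lintegral_zero]
  rw [gammaIntPdf]
  rw [if_neg (by simpa using hu)]
  simp

lemma gamma_univ (hϱ : 1 ≤ ϱ) {s : ℝ} (hs : 0 < s) :
    gammaIntMeasure ϱ s univ = 1 := by
  have : (univ : Set ℝ) = Iic 0 ∪ Ioi 0 := by simp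
  rw [this, measure_union (by simp [disjoint_left]) measurableSet_Ioi,
    gamma_Iic_zero hϱ hs, gamma_survival hϱ hs le_rfl, zero_add]
  rw [zero_div, stdF_zero]
  simp



lemma stdF_tendsto_one (hϱ : 1 ≤ ϱ) :
    Filter.Tendsto (stdF ϱ) Filter.atTop (nhds 1) := by
  have h := intervalIntegral_tendsto_integral_Ioi (μ := volume) 0
    (g0_integrableOn_Ioi hϱ 0 le_rfl) Filter.tendsto_id
  have h2 := h.const_mul (1 / (Nat.factorial (ϱ - 1) : ℝ))
  rw [g0_integral_Ioi_zero hϱ] at h2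
  have hfact : ((Nat.factorial (ϱ - 1) : ℝ)) ≠ 0 := by positivity
  unfold stdF
  have hff : (1 / (Nat.factorial (ϱ - 1) : ℝ)) * (Nat.factorial (ϱ - 1) : ℝ) = 1 := by
    field_simp
  rw [hff] at h2
  exact h2

lemma stdF_le_one (hϱ : 1 ≤ ϱ) {x : ℝ} (hx : 0 ≤ x) : stdF ϱ x ≤ 1 :=
  le_of_lt (stdF_lt_one hϱ hx)

/-- density of the minimum of `n-1` iid Gamma(ϱ,s). -/
noncomputable def minDens (ϱ n : ℕ) (s x : ℝ) : ℝ :=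
  ((n:ℝ) - 1) * (1 - stdF ϱ (x / s)) ^ (n - 2) * gammaIntPdf ϱ s x

lemma minDens_nonneg (hϱ : 1 ≤ ϱ) {n : ℕ} (hn : 2 ≤ n) {s : ℝ} (hs : 0 < s) (x : ℝ) :
    0 ≤ minDens ϱ n s x := by
  unfold minDens
  rcases le_or_gt x 0 with h | h
  · rw [gammaIntPdf, if_neg (not_lt.mpr h)]; simp
  · have h1 : stdF ϱ (x / s) ≤ 1 := stdF_le_one hϱ (by positivity)
    have h2 : (1:ℝ) ≤ n := by exact_mod_cast le_trans one_le_two hn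
    have := gammaIntPdf_nonneg ϱ hs x
    have h3 : (0:ℝ) ≤ 1 - stdF ϱ (x / s) := by linarith
    exact mul_nonneg (mul_nonneg (by linarith) (pow_nonneg h3 _)) this

lemma minDens_measurable (ϱ n : ℕ) (s : ℝ) : Measurable (minDens ϱ n s) := by
  unfold minDens
  exact (((measurable_const.sub
    ((stdF_continuous.measurable).comp (measurable_id.div_const s))).pow_const _).const_mul
    _).mul (gammaIntPdf_measurable ϱ s)

lemma minDens_integrableOn (hϱ : 1 ≤ ϱ) {n : ℕ} (hn : 2 ≤ n) {s : ℝ} (hs : 0 < s)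
    {t : ℝ} (ht : 0 ≤ t) : IntegrableOn (minDens ϱ n s) (Ioi t) := by
  refine Integrable.mono ((gammaIntPdf_integrableOn_Ioi hϱ hs ht).const_mul ((n:ℝ) - 1))
    ((minDens_measurable ϱ n s).aestronglyMeasurable) ?_
  filter_upwards [ae_restrict_mem measurableSet_Ioi] with x hx
  have hx0 : 0 < x := lt_of_le_of_lt ht hx
  have h1 : 0 ≤ stdF ϱ (x / s) := stdF_nonneg (by positivity)
  have h2 : stdF ϱ (x / s) ≤ 1 := stdF_le_one hϱ (by positivity)
  have h3 : (1:ℝ) ≤ n := by exact_mod_cast le_trans one_le_two hn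
  have hpdf := gammaIntPdf_nonneg ϱ hs x
  rw [Real.norm_eq_abs, Real.norm_eq_abs, abs_of_nonneg (minDens_nonneg hϱ hn hs x),
    abs_of_nonneg (mul_nonneg (by linarith) hpdf)]
  unfold minDens
  have h4 : (1 - stdF ϱ (x / s)) ^ (n - 2) ≤ 1 :=
    pow_le_one₀ (by linarith) (by linarith)
  calc ((n:ℝ) - 1) * (1 - stdF ϱ (x / s)) ^ (n - 2) * gammaIntPdf ϱ s x
      ≤ ((n:ℝ) - 1) * 1 * gammaIntPdf ϱ s x := by
        apply mul_le_mul_of_nonneg_right _ hpdf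
        apply mul_le_mul_of_nonneg_left h4 (by linarith)
    _ = ((n:ℝ) - 1) * gammaIntPdf ϱ s x := by ring

lemma hasDerivAt_G (hϱ : 1 ≤ ϱ) {n : ℕ} (hn : 2 ≤ n) {s : ℝ} (hs : 0 < s) (x : ℝ) :
    HasDerivAt (fun v => -(1 - stdF ϱ (v / s)) ^ (n - 1))
      (((n:ℝ) - 1) * (1 - stdF ϱ (x / s)) ^ (n - 2) *
        (g0 ϱ (x / s) / (Nat.factorial (ϱ - 1) : ℝ) / s)) x := by
  have h1 : HasDerivAt (fun v : ℝ => v / s) (1 / s) x := by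
    simpa using (hasDerivAt_id x).div_const s
  have h2 : HasDerivAt (fun v => stdF ϱ (v / s))
      ((g0 ϱ (x / s) / (Nat.factorial (ϱ - 1) : ℝ)) * (1 / s)) x := by
    have := (stdF_hasDerivAt (ϱ := ϱ) (x / s)).comp x h1; exact this
  have h3 := ((h2.const_sub 1).pow (n - 1)).neg
  have hn1 : ((n - 1 : ℕ) : ℝ) = (n : ℝ) - 1 := by
    push_cast [le_trans one_le_two hn]; ring
  have hn2 : n - 1 - 1 = n - 2 := by omega
  refine h3.congr_deriv ?_
  rw [hn1, hn2]
  field_simp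
  try ring

lemma minDens_integral_Ioi (hϱ : 1 ≤ ϱ) {n : ℕ} (hn : 2 ≤ n) {s : ℝ} (hs : 0 < s)
    {t : ℝ} (ht : 0 ≤ t) :
    ∫ x in Ioi t, minDens ϱ n s x = (1 - stdF ϱ (t / s)) ^ (n - 1) := by
  have key : ∫ x in Ioi t, minDens ϱ n s x
      = 0 - (-(1 - stdF ϱ (t / s)) ^ (n - 1)) := by
    refine integral_Ioi_of_hasDerivAt_of_tendsto
      (f := fun v => -(1 - stdF ϱ (v / s)) ^ (n - 1))
      (((continuous_const.sub (stdF_continuous.comp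
        (continuous_id.div_const s))).pow _).neg.continuousWithinAt)
      (fun x hx => ?_) (minDens_integrableOn hϱ hn hs ht) ?_
    · have hx0 : 0 < x := lt_of_le_of_lt ht hx
      have := hasDerivAt_G hϱ hn hs x
      refine this.congr_deriv ?_
      unfold minDens
      rw [gammaIntPdf_eq hϱ hs, if_pos hx0, div_div]
      ring
    · have hT : Filter.Tendsto (fun v : ℝ => stdF ϱ (v / s)) Filter.atTop (nhds 1) :=
        (stdF_tendsto_one hϱ).comp (Filter.tendsto_id.atTop_div_const hs)
      have hc : Continuous (fun u : ℝ => -(1 - u) ^ (n - 1)) :=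
        ((continuous_const.sub continuous_id).pow (n - 1)).neg
      have := (hc.tendsto 1).comp hT
      simp only [Function.comp_def] at this ⊢
      have hz : -((1 - (1:ℝ)) ^ (n - 1)) = 0 := by
        rw [sub_self, zero_pow (by omega : n - 1 ≠ 0)]; ring
      rw [← hz]
      exact this
  rw [key]; ring

lemma stdF_mem_Ioo (hϱ : 1 ≤ ϱ) {v : ℝ} (hv : 0 < v) : stdF ϱ v ∈ Ioo (0:ℝ) 1 :=
  ⟨stdF_pos hv, stdF_lt_one hϱ (le_of_lt hv)⟩

lemma Finv_stdF (hϱ : 1 ≤ ϱ) (Finv : ℝ → ℝ)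
    (hFinv : ∀ w ∈ Ioo (0:ℝ) 1, 0 < Finv w ∧ stdF ϱ (Finv w) = w)
    {v : ℝ} (hv : 0 < v) : Finv (stdF ϱ v) = v := by
  obtain ⟨h1, h2⟩ := hFinv _ (stdF_mem_Ioo hϱ hv)
  exact stdF_strictMonoOn.injOn (le_of_lt h1) (le_of_lt hv) h2

lemma image_one_sub_stdF (hϱ : 1 ≤ ϱ) (Finv : ℝ → ℝ)
    (hFinv : ∀ w ∈ Ioo (0:ℝ) 1, 0 < Finv w ∧ stdF ϱ (Finv w) = w) :
    (fun v => 1 - stdF ϱ v) '' (Ioi 0) = Ioo (0:ℝ) 1 := by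
  ext w
  constructor
  · rintro ⟨v, hv, rfl⟩
    have := stdF_mem_Ioo hϱ hv
    simp only [mem_Ioo]
    constructor <;> [linarith [this.2]; linarith [this.1]]
  · intro hw
    have hw' : 1 - w ∈ Ioo (0:ℝ) 1 := ⟨by linarith [hw.2], by linarith [hw.1]⟩
    obtain ⟨h1, h2⟩ := hFinv _ hw'
    exact ⟨Finv (1 - w), h1, by simp only []; rw [h2]; ring⟩

lemma rhs_change (hϱ : 1 ≤ ϱ) {n : ℕ} (Finv : ℝ → ℝ)
    (hFinv : ∀ w ∈ Ioo (0:ℝ) 1, 0 < Finv w ∧ stdF ϱ (Finv w) = w) (z : ℝ) :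
    ∫ w in Ioo (0:ℝ) 1, (1 - stdF ϱ (z * Finv (1 - w))) * w ^ (n - 2)
      = ∫ v in Ioi (0:ℝ), (g0 ϱ v / (Nat.factorial (ϱ - 1) : ℝ)) *
          ((1 - stdF ϱ (z * v)) * (1 - stdF ϱ v) ^ (n - 2)) := by
  have hderiv : ∀ v ∈ Ioi (0:ℝ), HasDerivWithinAt (fun v => 1 - stdF ϱ v)
      (-(g0 ϱ v / (Nat.factorial (ϱ - 1) : ℝ))) (Ioi 0) v := fun v _ =>
    ((stdF_hasDerivAt v).const_sub 1).hasDerivWithinAt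
  have hinj : InjOn (fun v => 1 - stdF ϱ v) (Ioi 0) := by
    intro a ha b hb hab
    have : stdF ϱ a = stdF ϱ b := by dsimp at hab; linarith
    exact stdF_strictMonoOn.injOn (mem_Ici.mpr (le_of_lt ha)) (mem_Ici.mpr (le_of_lt hb)) this
  rw [← image_one_sub_stdF hϱ Finv hFinv,
    integral_image_eq_integral_abs_deriv_smul measurableSet_Ioi hderiv hinj]
  refine setIntegral_congr_fun measurableSet_Ioi (fun v hv => ?_)
  have hv0 : (0:ℝ) < v := hv
  have h1 : (1:ℝ) - (1 - stdF ϱ v) = stdF ϱ v := by ring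
  rw [smul_eq_mul, h1, Finv_stdF hϱ Finv hFinv hv0, abs_neg,
    abs_of_nonneg (div_nonneg (g0_nonneg (le_of_lt hv0)) (by positivity))]

lemma attach_inf' {ι : Type*} (s : Finset ι) (h : s.Nonempty) (h2 : s.attach.Nonempty)
    (f : ι → ℝ) : s.attach.inf' h2 (fun i => f i.1) = s.inf' h f := by
  apply le_antisymm
  · obtain ⟨i, hi, hval⟩ := Finset.exists_mem_eq_inf' h f
    rw [hval]
    exact Finset.inf'_le _ (Finset.mem_attach _ ⟨i, hi⟩)
  · exact Finset.le_inf' _ _ (fun b _ => Finset.inf'_le f b.2)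

end GammaAux


open GammaAux

/-- For `n ≥ 2` i.i.d. Gamma(ϱ, ς²) random variables with integer shape `ϱ ≥ 1` and scale
`s = ς² > 0`, letting `Fρ` be the CDF of Gamma(ϱ, 1) and `Finv` its inverse on `(0, 1)`,
for every `z ≥ 1`,
`P(γ_n / γ_(1) > z) = (n−1) ∫₀¹ (1 − Fρ(z Fρ⁻¹(1 − w))) w^(n−2) dw`;
in particular this probability does not depend on the scale `ς²`. -/
theorem prob_ratio_gt_z_eq_scale_free_integral
    {Ω : Type*} [MeasurableSpace Ω] (μ : Measure Ω) [IsProbabilityMeasure μ]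
    (n ϱ : ℕ) (hn : 2 ≤ n) (hϱ : 1 ≤ ϱ)
    (s : ℝ) (hs : 0 < s)
    (γ : Fin n → Ω → ℝ) (hm : ∀ i, Measurable (γ i))
    (hindep : iIndepFun γ μ)
    (hlaw : ∀ i, Measure.map (γ i) μ = gammaIntMeasure ϱ s)
    (Fρ : ℝ → ℝ)
    (hFρ : ∀ x, Fρ x = (1 / (Nat.factorial (ϱ - 1) : ℝ)) *
      ∫ t in (0 : ℝ)..x, t ^ (ϱ - 1) * Real.exp (-t))
    (Finv : ℝ → ℝ)
    (hFinv : ∀ w ∈ Ioo (0 : ℝ) 1, 0 < Finv w ∧ Fρ (Finv w) = w)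
    (z : ℝ) (hz : 1 ≤ z) :
    (μ {ω | z < γ ⟨n - 1, by omega⟩ ω / ⨅ i, γ i ω}).toReal =
      ((n : ℝ) - 1) *
        ∫ w in Ioo (0 : ℝ) 1, (1 - Fρ (z * Finv (1 - w))) * w ^ (n - 2) := by
  classical
  have hF : Fρ = stdF ϱ := funext fun x => (hFρ x).trans rfl
  subst hF
  have hz0 : (0:ℝ) < z := lt_of_lt_of_le one_pos hz
  set N : Fin n := ⟨n - 1, by omega⟩ with hNdef
  haveI : Nonempty (Fin n) := ⟨N⟩
  set S : Finset (Fin n) := Finset.univ.erase N with hSdef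
  have hS : S.Nonempty := by
    refine ⟨⟨0, by omega⟩, Finset.mem_erase.mpr ⟨?_, Finset.mem_univ _⟩⟩
    simp only [hNdef, Ne, Fin.mk.injEq]
    omega
  have hScard : S.card = n - 1 := by
    rw [hSdef, Finset.card_erase_of_mem (Finset.mem_univ _), Finset.card_univ,
      Fintype.card_fin]
  set M : Ω → ℝ := fun ω => S.inf' hS fun i => γ i ω with hMdef
  have hMmeas : Measurable M := by
    have : M = (fun v : Fin n → ℝ => S.inf' hS fun i => v i) ∘ (fun ω i => γ i ω) := rfl
    rw [this]
    exact (Continuous.finset_inf'_apply hS fun i _ => continuous_apply i).measurable.comp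
      (measurable_pi_lambda _ hm)
  -- a.s. positivity
  have hpos : ∀ᵐ ω ∂μ, ∀ i, 0 < γ i ω := by
    rw [MeasureTheory.ae_all_iff]
    intro i
    have h0 : μ (γ i ⁻¹' Iic 0) = 0 := by
      rw [← Measure.map_apply (hm i) measurableSet_Iic, hlaw i, gamma_Iic_zero hϱ hs]
    rw [ae_iff]
    convert h0 using 2
    ext ω
    simp [not_lt]
  -- event rewrite
  have hevent : μ {ω | z < γ N ω / ⨅ i, γ i ω} = μ {ω | z * M ω < γ N ω} := by
    refine measure_congr (Filter.eventuallyEq_set.mpr ?_)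
    filter_upwards [hpos] with ω hω
    show (z < γ N ω / ⨅ i, γ i ω) ↔ (z * M ω < γ N ω)
    have hbdd : BddBelow (range fun i => γ i ω) := (finite_range _).bddBelow
    have hIle : ∀ j, (⨅ i, γ i ω) ≤ γ j ω := fun j => ciInf_le hbdd j
    obtain ⟨j, hj, hjval⟩ := Finset.exists_mem_eq_inf' Finset.univ_nonempty (fun i => γ i ω)
    have hIval : (⨅ i, γ i ω) = γ j ω := by
      rw [← Finset.inf'_univ_eq_ciInf, hjval]
    have hI0 : 0 < ⨅ i, γ i ω := hIval ▸ hω j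
    have hIM : (⨅ i, γ i ω) ≤ M ω := by
      obtain ⟨k, hk, hkval⟩ := Finset.exists_mem_eq_inf' hS (fun i => γ i ω)
      have hMk : M ω = γ k ω := hkval
      rw [hMk]
      exact hIle k
    constructor
    · intro hlt
      have h1 : z * (⨅ i, γ i ω) < γ N ω := (lt_div_iff₀ hI0).mp hlt
      rcases eq_or_ne j N with hjN | hjN
      · exfalso
        rw [hjN] at hIval
        rw [hIval] at h1
        nlinarith [hω N]
      · have hjS : j ∈ S := Finset.mem_erase.mpr ⟨hjN, Finset.mem_univ _⟩
        have hMle : M ω ≤ γ j ω := Finset.inf'_le _ hjS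
        have : z * M ω ≤ z * γ j ω :=
          mul_le_mul_of_nonneg_left hMle (by linarith)
        rw [← hIval] at this
        exact lt_of_le_of_lt this h1
    · intro hlt
      have h2 : z * (⨅ i, γ i ω) ≤ z * M ω :=
        mul_le_mul_of_nonneg_left hIM (by linarith)
      exact (lt_div_iff₀ hI0).mpr (lt_of_le_of_lt h2 hlt)
  -- independence of M and γ N
  have hNS : N ∉ S := Finset.notMem_erase _ _
  have hMY : IndepFun M (γ N) μ := by
    have hdis : Disjoint S {N} := Finset.disjoint_singleton_right.mpr hNS
    have h := hindep.indepFun_finset S {N} hdis hm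
    have hSa : S.attach.Nonempty := Finset.attach_nonempty_iff.mpr hS
    have h2 := h.comp
      (φ := fun v : (i : S) → ℝ => S.attach.inf' hSa fun i => v i)
      (ψ := fun v : (i : ({N} : Finset (Fin n))) → ℝ => v ⟨N, Finset.mem_singleton_self N⟩)
      (Continuous.finset_inf'_apply hSa fun i _ => continuous_apply i).measurable
      (measurable_pi_apply _ : Measurable fun v : (i : ({N} : Finset (Fin n))) → ℝ =>
        v ⟨N, Finset.mem_singleton_self N⟩)
    have hφ : (fun v : (i : S) → ℝ => S.attach.inf' hSa fun i => v i) ∘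
        (fun a (i : S) => γ i a) = M := by
      funext a
      exact attach_inf' S hS hSa fun i => γ i a
    have hψ : (fun v : (i : ({N} : Finset (Fin n))) → ℝ =>
        v ⟨N, Finset.mem_singleton_self N⟩) ∘ (fun a (i : ({N} : Finset (Fin n))) => γ i a)
        = γ N := rfl
    rwa [hφ, hψ] at h2
  -- survival function of M
  have hMsurv : ∀ t : ℝ, 0 ≤ t →
      μ {ω | t < M ω} = ENNReal.ofReal ((1 - stdF ϱ (t / s)) ^ (n - 1)) := by
    intro t ht
    have hset : {ω | t < M ω} = ⋂ i ∈ S, γ i ⁻¹' Ioi t := by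
      ext ω
      simp only [mem_setOf_eq, mem_iInter, mem_preimage, mem_Ioi]
      exact Finset.lt_inf'_iff _
    rw [hset, hindep.measure_inter_preimage_eq_mul S (fun i _ => measurableSet_Ioi)]
    have heach : ∀ i ∈ S, μ (γ i ⁻¹' Ioi t) = ENNReal.ofReal (1 - stdF ϱ (t / s)) := by
      intro i _
      rw [← Measure.map_apply (hm i) measurableSet_Ioi, hlaw i, gamma_survival hϱ hs ht]
    rw [Finset.prod_congr rfl heach, Finset.prod_const, hScard, ← ENNReal.ofReal_pow]
    exact sub_nonneg.mpr (stdF_le_one hϱ (div_nonneg ht hs.le))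
  -- identification of the law of M
  set ν : Measure ℝ := volume.withDensity (fun x => ENNReal.ofReal (minDens ϱ n s x)) with hνdef
  have hν_Ioi : ∀ t : ℝ, 0 ≤ t →
      ν (Ioi t) = ENNReal.ofReal ((1 - stdF ϱ (t / s)) ^ (n - 1)) := by
    intro t ht
    rw [hνdef, withDensity_apply _ measurableSet_Ioi,
      ← ofReal_integral_eq_lintegral_ofReal (minDens_integrableOn hϱ hn hs ht)
        (Filter.Eventually.of_forall (minDens_nonneg hϱ hn hs)),
      minDens_integral_Ioi hϱ hn hs ht]
  have hν_Iic_zero : ∀ a : ℝ, a ≤ 0 → ν (Iic a) = 0 := by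
    intro a ha
    rw [hνdef, withDensity_apply _ measurableSet_Iic]
    rw [setLIntegral_congr_fun measurableSet_Iic
      (fun x hx => ?_), lintegral_zero]
    have hx0 : ¬ (0 < x) := by simp only [mem_Iic] at hx; push_neg; linarith
    unfold minDens gammaIntPdf
    rw [if_neg hx0]
    simp
  have hν_univ : ν univ = 1 := by
    have hsplit : (univ : Set ℝ) = Iic 0 ∪ Ioi 0 := by simp
    rw [hsplit, measure_union (by simp [disjoint_left]) measurableSet_Ioi,
      hν_Iic_zero 0 le_rfl, hν_Ioi 0 le_rfl, zero_add, zero_div, stdF_zero]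
    simp
  haveI hνfin : IsProbabilityMeasure ν := ⟨hν_univ⟩
  haveI : IsProbabilityMeasure (Measure.map M μ) :=
    Measure.isProbabilityMeasure_map hMmeas.aemeasurable
  have hMpos : ∀ᵐ ω ∂μ, 0 < M ω := by
    filter_upwards [hpos] with ω hω
    obtain ⟨k, hk, hkval⟩ := Finset.exists_mem_eq_inf' hS (fun i => γ i ω)
    have hMk : M ω = γ k ω := hkval
    rw [hMk]
    exact hω k
  have hmapM : Measure.map M μ = ν := by
    refine MeasureTheory.Measure.ext_of_Iic (Measure.map M μ) ν (fun a => ?_)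
    rcases le_or_gt a 0 with ha | ha
    · rw [hν_Iic_zero a ha, Measure.map_apply hMmeas measurableSet_Iic]
      rw [measure_eq_zero_iff_ae_notMem]
      filter_upwards [hMpos] with ω hω
      simp only [mem_preimage, mem_Iic]
      push_neg
      linarith
    · have hL : Measure.map M μ (Iic a) = 1 - μ {ω | a < M ω} := by
        rw [Measure.map_apply hMmeas measurableSet_Iic]
        have hcompl : M ⁻¹' Iic a = {ω | a < M ω}ᶜ := by
          ext ω; simp [not_lt]
        rw [hcompl, measure_compl (measurableSet_lt measurable_const hMmeas)
          (measure_ne_top μ _), measure_univ]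
      have hR : ν (Iic a) = 1 - ν (Ioi a) := by
        rw [← compl_Ioi, measure_compl measurableSet_Ioi (measure_ne_top _ _), hν_univ]
      rw [hL, hR, hMsurv a ha.le, hν_Ioi a ha.le]
  -- main computation
  have hset2 : MeasurableSet {p : ℝ × ℝ | z * p.1 < p.2} :=
    measurableSet_lt (measurable_fst.const_mul z) measurable_snd
  have hprod := (ProbabilityTheory.indepFun_iff_map_prod_eq_prod_map_map
    hMmeas.aemeasurable (hm N).aemeasurable).mp hMY
  have h3 : μ {ω | z * M ω < γ N ω}
      = (Measure.map (fun ω => (M ω, γ N ω)) μ) {p : ℝ × ℝ | z * p.1 < p.2} := by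
    rw [Measure.map_apply (hMmeas.prodMk (hm N)) hset2]
    rfl
  have h4 : μ {ω | z * M ω < γ N ω}
      = ∫⁻ x, gammaIntMeasure ϱ s (Ioi (z * x)) ∂(Measure.map M μ) := by
    rw [h3, hprod, Measure.prod_apply hset2]
    refine lintegral_congr (fun x => ?_)
    have hpre : (Prod.mk x ⁻¹' {p : ℝ × ℝ | z * p.1 < p.2}) = Ioi (z * x) := rfl
    rw [hpre, hlaw N]
  set H : ℝ → ℝ := fun x => minDens ϱ n s x * (1 - stdF ϱ (z * x / s)) with hHdef
  have hsurvmeas : Measurable (fun x => gammaIntMeasure ϱ s (Ioi (z * x))) := by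
    refine Antitone.measurable (fun x y hxy => measure_mono (Ioi_subset_Ioi ?_))
    exact mul_le_mul_of_nonneg_left hxy (le_of_lt hz0)
  have h5 : μ {ω | z * M ω < γ N ω} = ∫⁻ x in Ioi 0, ENNReal.ofReal (H x) := by
    rw [h4, hmapM, hνdef, lintegral_withDensity_eq_lintegral_mul _
      ((minDens_measurable ϱ n s).ennreal_ofReal) hsurvmeas]
    have hpt : ∀ x : ℝ,
        ((fun x => ENNReal.ofReal (minDens ϱ n s x)) *
          (fun x => gammaIntMeasure ϱ s (Ioi (z * x)))) x
        = (Ioi (0:ℝ)).indicator (fun x => ENNReal.ofReal (H x)) x := by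
      intro x
      simp only [Pi.mul_apply]
      rcases le_or_gt x 0 with hx | hx
      · have hmd : minDens ϱ n s x = 0 := by
          unfold minDens gammaIntPdf
          rw [if_neg (not_lt.mpr hx)]
          ring
        rw [hmd, Set.indicator_of_notMem (by simp [mem_Ioi, not_lt, hx] : x ∉ Ioi (0:ℝ))]
        simp
      · have hzx : (0:ℝ) ≤ z * x := by positivity
        rw [gamma_survival hϱ hs hzx, Set.indicator_of_mem (mem_Ioi.mpr hx), hHdef,
          ← ENNReal.ofReal_mul (minDens_nonneg hϱ hn hs x)]
    rw [lintegral_congr hpt, lintegral_indicator measurableSet_Ioi]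
  have hHmeas : Measurable H := by
    rw [hHdef]
    exact (minDens_measurable ϱ n s).mul (measurable_const.sub
      (stdF_continuous.measurable.comp ((measurable_id.const_mul z).div_const s)))
  have hHint : IntegrableOn H (Ioi 0) := by
    refine Integrable.mono (minDens_integrableOn hϱ hn hs le_rfl)
      hHmeas.aestronglyMeasurable ?_
    filter_upwards [ae_restrict_mem measurableSet_Ioi] with x hx
    have hx0 : (0:ℝ) < x := hx
    have h1 : 0 ≤ stdF ϱ (z * x / s) := stdF_nonneg (by positivity)
    have h2 : stdF ϱ (z * x / s) ≤ 1 := stdF_le_one hϱ (by positivity)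
    have h3' := minDens_nonneg hϱ hn hs x
    simp only [hHdef, Real.norm_eq_abs]
    rw [abs_of_nonneg (mul_nonneg h3' (by linarith)), abs_of_nonneg h3']
    nlinarith
  have hHnn : ∀ x ∈ Ioi (0:ℝ), 0 ≤ H x := by
    intro x hx
    have hx0 : (0:ℝ) < x := hx
    have h2 : stdF ϱ (z * x / s) ≤ 1 := stdF_le_one hϱ (by positivity)
    have h3' := minDens_nonneg hϱ hn hs x
    simp only [hHdef]
    exact mul_nonneg h3' (by linarith)
  have h6 : (μ {ω | z * M ω < γ N ω}).toReal = ∫ x in Ioi 0, H x := by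
    rw [h5, ← ofReal_integral_eq_lintegral_ofReal hHint ?hnn, ENNReal.toReal_ofReal
      (setIntegral_nonneg measurableSet_Ioi hHnn)]
    case hnn =>
      filter_upwards [ae_restrict_mem measurableSet_Ioi] with x hx
      exact hHnn x hx
  set Ψ : ℝ → ℝ := fun v => ((n:ℝ) - 1) * (1 - stdF ϱ v) ^ (n - 2) *
      (g0 ϱ v / (Nat.factorial (ϱ - 1) : ℝ)) * (1 - stdF ϱ (z * v)) with hΨdef
  have h7 : ∫ x in Ioi 0, H x = ∫ v in Ioi (0:ℝ), Ψ v := by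
    have hcong : ∀ x ∈ Ioi (0:ℝ), H x = s⁻¹ • Ψ (s⁻¹ * x) := by
      intro x hx
      have hx0 : (0:ℝ) < x := hx
      rw [hHdef, hΨdef]
      simp only [smul_eq_mul]
      unfold minDens
      rw [gammaIntPdf_eq hϱ hs, if_pos hx0,
        show s⁻¹ * x = x / s by field_simp,
        show z * (x / s) = z * x / s by ring]
      have hfact : (0:ℝ) < (Nat.factorial (ϱ - 1) : ℝ) := by positivity
      field_simp
      try ring
    rw [setIntegral_congr_fun measurableSet_Ioi hcong, integral_smul,
      integral_comp_mul_left_Ioi Ψ 0 (inv_pos.mpr hs), mul_zero, inv_inv,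
      smul_smul, inv_mul_cancel₀ hs.ne', one_smul]
  have h8 := rhs_change hϱ (n := n) Finv hFinv z
  show (μ {ω | z < γ N ω / ⨅ i, γ i ω}).toReal
      = ((n : ℝ) - 1) * ∫ w in Ioo (0:ℝ) 1, (1 - stdF ϱ (z * Finv (1 - w))) * w ^ (n - 2)
  rw [hevent, h6, h7, h8, ← integral_const_mul]
  refine setIntegral_congr_fun measurableSet_Ioi (fun v hv => ?_)
  rw [hΨdef]
  ring
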